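/- arXiv:2303.01029 — 3 statements merged into one kernel-verified Lean document; each statement's English description precedes it below -/
import Mathlib

section
/- Let H and L be n×n Hermitian complex matrices with L positive definite (smallest eigenvalue λ₀ > 0). Then the Cauchy principal value lim_{R→∞} ∫_{-R}^{R} (1/(1+ik)) e^{-i(H+kL)} dk equals the zero matrix. -/
open Matrix
open scoped ComplexOrder

open MeasureTheory Real
open scoped Matrix.Norms.L2Operator

namespace PVAux

/-- If the quadratic form of `T` has real part at most `μ * ‖x‖²`, then `‖exp T‖ ≤ exp μ`. -/
lemma norm_exp_le_of_re_inner_le {E : Type*} [NormedAddCommGroup E] [InnerProductSpace ℂ E]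
    [CompleteSpace E] (T : E →L[ℂ] E) (μ : ℝ)
    (h : ∀ x : E, (inner ℂ (T x) x : ℂ).re ≤ μ * ‖x‖ ^ 2) :
    ‖NormedSpace.exp T‖ ≤ Real.exp μ := by
  refine ContinuousLinearMap.opNorm_le_bound _ (Real.exp_pos μ).le (fun x => ?_)
  set u : ℝ → E := fun s => (NormedSpace.exp ((s : ℂ) • T)) x with hu_def
  have hu : ∀ s : ℝ, HasDerivAt u (T (u s)) s := by
    intro s
    have h1 : HasDerivAt (fun w : ℂ => NormedSpace.exp (w • T))
        (T * NormedSpace.exp ((s : ℂ) • T)) (s : ℂ) := hasDerivAt_exp_smul_const' T (s : ℂ)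
    have h2 : HasDerivAt (fun w : ℂ => (NormedSpace.exp (w • T)) x)
        ((T * NormedSpace.exp ((s : ℂ) • T)) x) (s : ℂ) :=
      (ContinuousLinearMap.apply ℂ E x).hasFDerivAt.comp_hasDerivAt _ h1
    have h3 : HasDerivAt (fun s' : ℝ => (NormedSpace.exp (((s' : ℝ) : ℂ) • T)) x)
        (((1 : ℂ)) • ((T * NormedSpace.exp ((s : ℂ) • T)) x)) s :=
      h2.scomp s Complex.ofRealCLM.hasDerivAt
    simpa [hu_def] using h3
  set g : ℝ → ℝ := fun s => (inner ℂ (u s) (u s) : ℂ).re with hg_def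
  have hg : ∀ s : ℝ, HasDerivAt g ((inner ℂ (u s) (T (u s)) : ℂ) + inner ℂ (T (u s)) (u s)).re s :=
    fun s => Complex.reCLM.hasFDerivAt.comp_hasDerivAt s ((hu s).inner ℂ (hu s))
  have hgval : ∀ s, g s = ‖u s‖ ^ 2 := fun s => by
    rw [hg_def]; exact_mod_cast inner_self_eq_norm_sq (𝕜 := ℂ) (u s)
  have hg' : ∀ s : ℝ, ((inner ℂ (u s) (T (u s)) : ℂ) + inner ℂ (T (u s)) (u s)).re ≤ 2 * μ * g s := by
    intro s
    have h1 : ((inner ℂ (u s) (T (u s)) : ℂ)).re = ((inner ℂ (T (u s)) (u s) : ℂ)).re :=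
      inner_re_symm (𝕜 := ℂ) _ _
    have h2 := h (u s)
    rw [Complex.add_re, h1, hgval s]
    nlinarith [h2]
  set F : ℝ → ℝ := fun s => Real.exp (-(2 * μ) * s) * g s with hF_def
  have hF : ∀ s : ℝ, HasDerivAt F
      (Real.exp (-(2 * μ) * s) * (-(2 * μ)) * g s +
        Real.exp (-(2 * μ) * s) * ((inner ℂ (u s) (T (u s)) : ℂ) + inner ℂ (T (u s)) (u s)).re) s := by
    intro s
    have he : HasDerivAt (fun s : ℝ => Real.exp (-(2 * μ) * s))
        (Real.exp (-(2 * μ) * s) * (-(2 * μ))) s := by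
      have hlin : HasDerivAt (fun s : ℝ => -(2 * μ) * s) (-(2 * μ)) s := by
        simpa using (hasDerivAt_id s).const_mul (-(2*μ))
      simpa [mul_comm] using hlin.exp
    exact he.mul (hg s)
  have hanti : Antitone F := by
    refine antitone_of_deriv_nonpos (fun s => (hF s).differentiableAt) (fun s => ?_)
    rw [(hF s).deriv]
    have h2 := hg' s
    have h3 : 0 ≤ g s := by rw [hgval]; positivity
    have h4 : (0:ℝ) < Real.exp (-(2 * μ) * s) := Real.exp_pos _
    nlinarith
  have key : F 1 ≤ F 0 := hanti (by norm_num)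
  have h0 : F 0 = ‖x‖ ^ 2 := by
    simp [hF_def, hgval, hu_def]
  have h1 : F 1 = Real.exp (-(2*μ)) * ‖NormedSpace.exp T x‖ ^ 2 := by
    rw [hF_def]
    simp only [mul_one]
    rw [hgval]
    congr 2
    simp [hu_def]
  rw [h0, h1] at key
  have e1 : Real.exp μ * Real.exp μ = Real.exp (2*μ) := by
    rw [← Real.exp_add]; ring_nf
  have e2 : Real.exp (-(2*μ)) * Real.exp (2*μ) = 1 := by
    rw [← Real.exp_add]; simp
  have hsq : ‖NormedSpace.exp T x‖ ^ 2 ≤ (Real.exp μ * ‖x‖) ^ 2 := by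
    nlinarith [Real.exp_pos (2*μ), Real.exp_pos (-(2*μ)), sq_nonneg ‖x‖,
      norm_nonneg (NormedSpace.exp T x)]
  have h5 : (0:ℝ) ≤ Real.exp μ * ‖x‖ := by positivity
  nlinarith [norm_nonneg (NormedSpace.exp T x)]

lemma toEuclideanCLM_exp (n : ℕ) (A : Matrix (Fin n) (Fin n) ℂ) :
    Matrix.toEuclideanCLM (𝕜 := ℂ) (NormedSpace.exp A) =
      NormedSpace.exp (Matrix.toEuclideanCLM (𝕜 := ℂ) A) := by
  letI : NormedAlgebra ℚ (Matrix (Fin n) (Fin n) ℂ) := NormedAlgebra.restrictScalars ℚ ℂ _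
  exact NormedSpace.map_exp (Matrix.toEuclideanCLM (𝕜 := ℂ) (n := Fin n))
    (AddMonoidHomClass.isometry_of_norm _ (fun A => (Matrix.cstar_norm_def A).symm)).continuous A

variable {n : ℕ}

lemma inner_clm_eq_dot (L : Matrix (Fin n) (Fin n) ℂ) (x : EuclideanSpace ℂ (Fin n)) :
    (inner ℂ x (Matrix.toEuclideanCLM (𝕜 := ℂ) L x) : ℂ) =
      dotProduct (star (WithLp.equiv 2 _ x)) (L *ᵥ (WithLp.equiv 2 _ x)) := by
  rw [EuclideanSpace.inner_eq_star_dotProduct]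
  simp [dotProduct_comm]

lemma exists_rayleigh_lb (hn : 0 < n) {L : Matrix (Fin n) (Fin n) ℂ} (hL : L.PosDef) :
    ∃ lam : ℝ, 0 < lam ∧ ∀ x : EuclideanSpace ℂ (Fin n),
      lam * ‖x‖ ^ 2 ≤ (inner ℂ x (Matrix.toEuclideanCLM (𝕜 := ℂ) L x) : ℂ).re := by
  haveI : Nonempty (Fin n) := ⟨⟨0, hn⟩⟩
  haveI : Nontrivial (EuclideanSpace ℂ (Fin n)) := by
    refine ⟨0, (WithLp.equiv 2 _).symm (fun _ => 1), fun h => ?_⟩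
    have := congr_fun (congrArg (WithLp.equiv 2 _) h) ⟨0, hn⟩
    simpa using this
  set f : EuclideanSpace ℂ (Fin n) → ℝ :=
    fun x => (inner ℂ x (Matrix.toEuclideanCLM (𝕜 := ℂ) L x) : ℂ).re with hf
  have hcont : Continuous f := by
    apply Complex.continuous_re.comp
    exact continuous_inner.comp (continuous_id.prodMk
      (Matrix.toEuclideanCLM (𝕜 := ℂ) L).continuous) |>.congr (fun x => rfl)
  have hsph : (Metric.sphere (0 : EuclideanSpace ℂ (Fin n)) 1).Nonempty :=
    NormedSpace.sphere_nonempty.mpr zero_le_one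
  obtain ⟨x₀, hx₀mem, hx₀min'⟩ :=
    (isCompact_sphere (0 : EuclideanSpace ℂ (Fin n)) 1).exists_isMinOn hsph hcont.continuousOn
  have hx₀min : ∀ y ∈ Metric.sphere (0 : EuclideanSpace ℂ (Fin n)) 1, f x₀ ≤ f y :=
    fun y hy => hx₀min' hy
  have hx₀norm : ‖x₀‖ = 1 := by simpa using mem_sphere_zero_iff_norm.mp hx₀mem
  have hpos : 0 < f x₀ := by
    have hx₀ne : x₀ ≠ 0 := by intro h; rw [h] at hx₀norm; simp at hx₀norm
    have hvne : WithLp.equiv 2 _ x₀ ≠ 0 := by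
      intro h; apply hx₀ne
      simpa using congrArg (WithLp.equiv 2 _).symm h
    have h2 := hL.dotProduct_mulVec_pos hvne
    rw [Complex.lt_def] at h2
    show (0:ℝ) < (inner ℂ x₀ (Matrix.toEuclideanCLM (𝕜 := ℂ) L x₀) : ℂ).re
    rw [inner_clm_eq_dot]
    simpa using h2.1
  refine ⟨f x₀, hpos, fun x => ?_⟩
  rcases eq_or_ne x 0 with rfl | hx
  · simp
  · have hxn : (0:ℝ) < ‖x‖ := norm_pos_iff.mpr hx
    set y : EuclideanSpace ℂ (Fin n) := ‖x‖⁻¹ • x with hy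
    have hymem : y ∈ Metric.sphere (0 : EuclideanSpace ℂ (Fin n)) 1 := by
      rw [mem_sphere_zero_iff_norm, hy, norm_smul]
      simp [abs_of_pos hxn, inv_mul_cancel₀ hxn.ne']
    have hle := hx₀min y hymem
    have hcalc : f y = ‖x‖⁻¹ ^ 2 * f x := by
      have h1 : (inner ℂ y (Matrix.toEuclideanCLM (𝕜 := ℂ) L y) : ℂ)
          = ((‖x‖⁻¹ : ℝ) : ℂ) ^ 2 * (inner ℂ x (Matrix.toEuclideanCLM (𝕜 := ℂ) L x) : ℂ) := by
        rw [hy, RCLike.real_smul_eq_coe_smul (K := ℂ), _root_.map_smul, inner_smul_left,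
          inner_smul_right]
        simp [Complex.conj_ofReal]
        ring
      show (inner ℂ y (Matrix.toEuclideanCLM (𝕜 := ℂ) L y) : ℂ).re
          = ‖x‖⁻¹ ^ 2 * (inner ℂ x (Matrix.toEuclideanCLM (𝕜 := ℂ) L x) : ℂ).re
      rw [h1, ← Complex.ofReal_pow, Complex.re_ofReal_mul]
    rw [hcalc] at hle
    have := mul_le_mul_of_nonneg_left hle (le_of_lt (by positivity : (0:ℝ) < ‖x‖ ^ 2))
    calc f x₀ * ‖x‖ ^ 2 = ‖x‖ ^ 2 * f x₀ := by ring
    _ ≤ ‖x‖ ^ 2 * (‖x‖⁻¹ ^ 2 * f x) := this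
    _ = f x := by field_simp

lemma inner_hermitian_real {M : Matrix (Fin n) (Fin n) ℂ} (hM : M.IsHermitian)
    (x : EuclideanSpace ℂ (Fin n)) :
    ((inner ℂ x (Matrix.toEuclideanCLM (𝕜 := ℂ) M x) : ℂ)).im = 0 := by
  have hsa : IsSelfAdjoint (Matrix.toEuclideanCLM (𝕜 := ℂ) M) := by
    have : IsSelfAdjoint M := hM
    exact this.map (Matrix.toEuclideanCLM (𝕜 := ℂ))
  have hsym := ContinuousLinearMap.isSelfAdjoint_iff_isSymmetric.mp hsa
  have h1 : (starRingEnd ℂ) (inner ℂ x (Matrix.toEuclideanCLM (𝕜 := ℂ) M x) : ℂ)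
      = (inner ℂ x (Matrix.toEuclideanCLM (𝕜 := ℂ) M x) : ℂ) := by
    rw [inner_conj_symm]
    exact hsym x x
  exact Complex.conj_eq_iff_im.mp h1

lemma norm_exp_matrix_le {H L : Matrix (Fin n) (Fin n) ℂ} (hH : H.IsHermitian)
    (hLh : L.IsHermitian) (lam : ℝ)
    (hlam : ∀ x : EuclideanSpace ℂ (Fin n),
      lam * ‖x‖ ^ 2 ≤ (inner ℂ x (Matrix.toEuclideanCLM (𝕜 := ℂ) L x) : ℂ).re)
    {z : ℂ} (hz : z.im ≤ 0) :
    ‖NormedSpace.exp (-(Complex.I • (H + z • L)))‖ ≤ Real.exp (lam * z.im) := by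
  rw [Matrix.cstar_norm_def, toEuclideanCLM_exp]
  set T := Matrix.toEuclideanCLM (𝕜 := ℂ) (-(Complex.I • (H + z • L))) with hT
  refine norm_exp_le_of_re_inner_le T (lam * z.im) (fun x => ?_)
  have hTx : T x = -(Complex.I • (Matrix.toEuclideanCLM (𝕜 := ℂ) H x
      + z • Matrix.toEuclideanCLM (𝕜 := ℂ) L x)) := by
    rw [hT]
    simp [map_add, _root_.map_smul, map_neg]
  set a : ℂ := inner ℂ x (Matrix.toEuclideanCLM (𝕜 := ℂ) H x) with ha
  set b : ℂ := inner ℂ x (Matrix.toEuclideanCLM (𝕜 := ℂ) L x) with hb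
  have hre : ((inner ℂ (T x) x : ℂ)).re = ((inner ℂ x (T x) : ℂ)).re :=
    inner_re_symm (𝕜 := ℂ) (T x) x
  have hinner : (inner ℂ x (T x) : ℂ) = -(Complex.I * (a + z * b)) := by
    rw [hTx]
    rw [inner_neg_right, inner_smul_right, inner_add_right, inner_smul_right]
  have haim : a.im = 0 := inner_hermitian_real hH x
  have hbim : b.im = 0 := inner_hermitian_real hLh x
  have hbre : lam * ‖x‖ ^ 2 ≤ b.re := hlam x
  rw [hre, hinner]
  have hcalc : (-(Complex.I * (a + z * b))).re = z.im * b.re := by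
    simp [Complex.mul_re, Complex.mul_im, haim, hbim]
  rw [hcalc]
  calc z.im * b.re ≤ z.im * (lam * ‖x‖ ^ 2) := mul_le_mul_of_nonpos_left hbre hz
  _ = lam * z.im * ‖x‖ ^ 2 := by ring

end PVAux

set_option maxHeartbeats 1000000 in
/-- For Hermitian `H`, `L` with `L` positive definite, the Cauchy principal value
`lim_{R→∞} ∫_{-R}^R (1/(1+ik)) e^{-i(H+kL)} dk` is the zero matrix. -/
theorem principal_value_vanishes (n : ℕ) (H L : Matrix (Fin n) (Fin n) ℂ)
    (hH : H.IsHermitian) (hL : L.PosDef) :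
    Filter.Tendsto
      (fun R : ℝ => ∫ k in Set.Ioc (-R) R,
        (1 + Complex.I * k)⁻¹ • NormedSpace.exp (-(Complex.I • (H + (k : ℂ) • L))))
      Filter.atTop (nhds 0) := by
  rcases Nat.eq_zero_or_pos n with hn | hn
  · subst hn
    haveI : Subsingleton (Matrix (Fin 0) (Fin 0) ℂ) :=
      ⟨fun A B => by ext i j; exact i.elim0⟩
    have hconst : (fun R : ℝ => ∫ k in Set.Ioc (-R) R,
        (1 + Complex.I * k)⁻¹ • NormedSpace.exp (-(Complex.I • (H + (k : ℂ) • L))))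
        = fun _ => 0 := funext fun R => Subsingleton.elim _ _
    rw [hconst]
    exact tendsto_const_nhds
  obtain ⟨lam, hlampos, hlam⟩ := PVAux.exists_rayleigh_lb hn hL
  set fm : ℂ → Matrix (Fin n) (Fin n) ℂ :=
    fun ζ => (1 + Complex.I * ζ)⁻¹ • NormedSpace.exp (-(Complex.I • (H + ζ • L))) with hfm
  -- basic facts about `fm`
  have hre1 : ∀ ζ : ℂ, (1 + Complex.I * ζ).re = 1 - ζ.im := by
    intro ζ; simp [Complex.add_re, Complex.mul_re]; ring
  have him1 : ∀ ζ : ℂ, (1 + Complex.I * ζ).im = ζ.re := by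
    intro ζ; simp [Complex.add_im, Complex.mul_im]
  have hne : ∀ ζ : ℂ, ζ.im ≤ 0 → (1 + Complex.I * ζ) ≠ 0 := by
    intro ζ hζ h
    have := hre1 ζ
    rw [h] at this
    simp only [Complex.zero_re] at this
    linarith
  have hdiff : ∀ ζ : ℂ, ζ.im ≤ 0 → DifferentiableAt ℂ fm ζ := by
    intro ζ hζ
    have d1 : DifferentiableAt ℂ (fun ζ : ℂ => (1 + Complex.I * ζ)⁻¹) ζ :=
      ((differentiableAt_const (1:ℂ)).add (differentiableAt_id.const_mul Complex.I)).inv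
        (hne ζ hζ)
    have hMeq : (fun ζ : ℂ => -(Complex.I • (H + ζ • L)))
        = fun ζ : ℂ => (-(Complex.I • H)) + ζ • (-(Complex.I • L)) := by
      funext ξ
      rw [smul_add, neg_add, smul_comm Complex.I ξ L, smul_neg]
    have dM : DifferentiableAt ℂ (fun ζ : ℂ => -(Complex.I • (H + ζ • L))) ζ := by
      rw [hMeq]
      exact (differentiableAt_const _).add (differentiableAt_id.smul_const _)
    have hexp_an : AnalyticAt ℂ (NormedSpace.exp)
        (-(Complex.I • (H + ζ • L)) : Matrix (Fin n) (Fin n) ℂ) := by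
      apply NormedSpace.analyticAt_exp_of_mem_ball
      rw [NormedSpace.expSeries_radius_eq_top]
      exact edist_lt_top _ _
    have dexp := hexp_an.differentiableAt
    exact d1.smul (dexp.comp ζ dM)
  have hbnd : ∀ ζ : ℂ, ζ.im ≤ 0 →
      ‖fm ζ‖ ≤ (‖1 + Complex.I * ζ‖)⁻¹ * Real.exp (lam * ζ.im) := by
    intro ζ hζ
    rw [hfm]
    simp only
    rw [norm_smul, norm_inv]
    exact mul_le_mul_of_nonneg_left
      (PVAux.norm_exp_matrix_le hH hL.1 lam hlam hζ)
      (by positivity)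
  -- key bound for each R ≥ 1
  have key : ∀ R : ℝ, 1 ≤ R →
      ‖∫ k in Set.Ioc (-R) R,
        (1 + Complex.I * k)⁻¹ • NormedSpace.exp (-(Complex.I • (H + (k : ℂ) • L)))‖
        ≤ Real.exp (lam * (-R)) * (2 * R) + 2 * (R⁻¹ * lam⁻¹) := by
    intro R hR
    have hR0 : (0:ℝ) < R := by linarith
    have hIoc : (∫ k in Set.Ioc (-R) R,
        (1 + Complex.I * k)⁻¹ • NormedSpace.exp (-(Complex.I • (H + (k : ℂ) • L))))
        = ∫ x in (-R)..R, fm x := by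
      rw [intervalIntegral.integral_of_le (by linarith : -R ≤ R)]
    rw [hIoc]
    -- rectangle contour
    set z : ℂ := ⟨-R, -R⟩ with hz
    set w : ℂ := ⟨R, 0⟩ with hw
    have hd : DifferentiableOn ℂ fm (Set.uIcc z.re w.re ×ℂ Set.uIcc z.im w.im) := by
      intro ζ hmem
      have h2 := (Complex.mem_reProdIm.mp hmem).2
      rw [show z.im = -R from rfl, show w.im = (0:ℝ) from rfl,
        Set.uIcc_of_le (by linarith : (-R:ℝ) ≤ 0)] at h2
      exact (hdiff ζ h2.2).differentiableWithinAt
    have rect := Complex.integral_boundary_rect_eq_zero_of_differentiableOn fm z w hd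
    rw [show z.re = -R from rfl, show w.re = (R:ℝ) from rfl, show z.im = -R from rfl,
      show w.im = (0:ℝ) from rfl] at rect
    simp only [Complex.ofReal_zero, zero_mul, add_zero, Complex.ofReal_neg] at rect
    set A := ∫ x : ℝ in (-R)..R, fm (↑x + -↑R * Complex.I) with hA
    set B := ∫ x : ℝ in (-R)..R, fm ↑x with hB
    set C := ∫ y : ℝ in (-R)..(0:ℝ), fm (↑R + ↑y * Complex.I) with hC
    set D := ∫ y : ℝ in (-R)..(0:ℝ), fm (-↑R + ↑y * Complex.I) with hD
    have hBrepr : B = A + Complex.I • C - Complex.I • D := by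
      rw [← sub_eq_zero]
      have : B - (A + Complex.I • C - Complex.I • D)
          = -(A - B + Complex.I • C - Complex.I • D) := by abel
      rw [this, rect, neg_zero]
    rw [hBrepr]
    -- bound A
    have hAbound : ‖A‖ ≤ Real.exp (lam * (-R)) * (2 * R) := by
      have h := intervalIntegral.norm_integral_le_of_norm_le_const
        (a := -R) (b := R) (C := Real.exp (lam * (-R)))
        (f := fun x : ℝ => fm (↑x + -↑R * Complex.I)) ?_
      · calc ‖A‖ ≤ Real.exp (lam * (-R)) * |R - (-R)| := h
        _ = Real.exp (lam * (-R)) * (2 * R) := by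
            rw [abs_of_pos (by linarith)]; ring_nf
      · intro x hx
        have him : (↑x + -↑R * Complex.I).im = -R := by simp
        have hb := hbnd (↑x + -↑R * Complex.I) (by rw [him]; linarith)
        rw [him] at hb
        refine hb.trans ?_
        have habs : (1:ℝ) ≤ ‖1 + Complex.I * (↑x + -↑R * Complex.I)‖ := by
          have := Complex.re_le_norm (1 + Complex.I * (↑x + -↑R * Complex.I))
          rw [hre1] at this
          simp only [Complex.add_im, Complex.ofReal_im, Complex.mul_im, Complex.neg_im,
            Complex.ofReal_re] at this
          calc (1:ℝ) ≤ 1 - (↑x + -↑R * Complex.I).im := by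
                have : (↑x + -↑R * Complex.I).im = -R := him
                rw [this]; linarith
          _ ≤ _ := this
        have : (‖1 + Complex.I * (↑x + -↑R * Complex.I)‖)⁻¹ ≤ 1 :=
          inv_le_one_of_one_le₀ habs
        nlinarith [Real.exp_pos (lam * (-R)),
          norm_nonneg (1 + Complex.I * (↑x + -↑R * Complex.I))]
    -- side bounds
    have hside : ∀ c : ℝ, R ≤ |c| →
        ‖∫ y : ℝ in (-R)..(0:ℝ), fm (↑c + ↑y * Complex.I)‖ ≤ R⁻¹ * lam⁻¹ := by
      intro c hc
      have hgint : IntervalIntegrable (fun y : ℝ => R⁻¹ * Real.exp (lam * y))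
          volume (-R) 0 :=
        (Continuous.intervalIntegrable
          (continuous_const.mul (Real.continuous_exp.comp (continuous_const.mul continuous_id))) _ _)
      have hb : ∀ᵐ y : ℝ ∂(volume.restrict (Set.uIoc (-R) (0:ℝ))),
          ‖fm (↑c + ↑y * Complex.I)‖ ≤ R⁻¹ * Real.exp (lam * y) := by
        refine (ae_restrict_iff' measurableSet_uIoc).mpr (Filter.Eventually.of_forall ?_)
        intro y hy
        rw [Set.uIoc_of_le (by linarith : (-R:ℝ) ≤ 0)] at hy
        have him : (↑c + ↑y * Complex.I).im = y := by simp
        have hby := hbnd (↑c + ↑y * Complex.I) (by rw [him]; exact hy.2)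
        rw [him] at hby
        refine hby.trans ?_
        have habs : R ≤ ‖1 + Complex.I * (↑c + ↑y * Complex.I)‖ := by
          have h1 := Complex.abs_im_le_norm (1 + Complex.I * (↑c + ↑y * Complex.I))
          rw [him1] at h1
          simp only [Complex.add_re, Complex.ofReal_re, Complex.mul_re] at h1
          calc R ≤ |c| := hc
          _ ≤ _ := by
            refine le_trans (le_of_eq ?_) h1
            congr 1
            simp
        have : (‖1 + Complex.I * (↑c + ↑y * Complex.I)‖)⁻¹ ≤ R⁻¹ :=
          inv_anti₀ hR0 habs
        nlinarith [Real.exp_pos (lam * y),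
          norm_nonneg (1 + Complex.I * (↑c + ↑y * Complex.I))]
      have h := intervalIntegral.norm_integral_le_abs_of_norm_le hb hgint
      refine h.trans ?_
      have hint : (∫ y : ℝ in (-R)..(0:ℝ), R⁻¹ * Real.exp (lam * y))
          = R⁻¹ * (lam⁻¹ * (1 - Real.exp (lam * (-R)))) := by
        rw [intervalIntegral.integral_const_mul]
        congr 1
        have hF : ∀ y : ℝ, HasDerivAt (fun t : ℝ => lam⁻¹ * Real.exp (lam * t))
            (Real.exp (lam * y)) y := by
          intro y
          have hlin : HasDerivAt (fun t : ℝ => lam * t) lam y := by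
            simpa using (hasDerivAt_id y).const_mul lam
          have := (hlin.exp).const_mul lam⁻¹
          refine this.congr_deriv ?_
          field_simp
        rw [intervalIntegral.integral_eq_sub_of_hasDerivAt (fun y _ => hF y)
          ((Continuous.intervalIntegrable
            (Real.continuous_exp.comp (continuous_const.mul continuous_id)) _ _))]
        simp [Real.exp_zero]
        ring
      have h1 : 1 - Real.exp (lam * (-R)) ≤ 1 := by
        have := Real.exp_pos (lam * (-R)); linarith
      have h2 : (0:ℝ) ≤ lam⁻¹ := by positivity
      have h3 : (0:ℝ) ≤ R⁻¹ := by positivity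
      have h4 : (0:ℝ) ≤ 1 - Real.exp (lam * (-R)) := by
        have : Real.exp (lam * (-R)) ≤ 1 := by
          rw [Real.exp_le_one_iff]
          nlinarith
        linarith
      rw [hint, abs_of_nonneg (by positivity)]
      calc R⁻¹ * (lam⁻¹ * (1 - Real.exp (lam * (-R)))) ≤ R⁻¹ * (lam⁻¹ * 1) := by
            apply mul_le_mul_of_nonneg_left _ h3
            apply mul_le_mul_of_nonneg_left _ h2
            exact h1
      _ = R⁻¹ * lam⁻¹ := by ring
    have hCbound : ‖C‖ ≤ R⁻¹ * lam⁻¹ := hside R (le_abs_self R)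
    have hDbound : ‖D‖ ≤ R⁻¹ * lam⁻¹ := by
      have h := hside (-R) (by rw [abs_neg]; exact le_abs_self R)
      rw [hD]
      simpa using h
    calc ‖A + Complex.I • C - Complex.I • D‖
        ≤ ‖A + Complex.I • C‖ + ‖Complex.I • D‖ := norm_sub_le _ _
    _ ≤ ‖A‖ + ‖Complex.I • C‖ + ‖Complex.I • D‖ := by
        have := norm_add_le A (Complex.I • C); linarith
    _ = ‖A‖ + ‖C‖ + ‖D‖ := by
        rw [norm_smul, norm_smul, Complex.norm_I, one_mul, one_mul]
    _ ≤ Real.exp (lam * (-R)) * (2 * R) + (R⁻¹ * lam⁻¹) + (R⁻¹ * lam⁻¹) := by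
        linarith
    _ = Real.exp (lam * (-R)) * (2 * R) + 2 * (R⁻¹ * lam⁻¹) := by ring
  -- conclude by squeezing
  have hG : Filter.Tendsto
      (fun R : ℝ => Real.exp (lam * (-R)) * (2 * R) + 2 * (R⁻¹ * lam⁻¹))
      Filter.atTop (nhds 0) := by
    have h1 : Filter.Tendsto (fun R : ℝ => Real.exp (lam * (-R)) * (2 * R))
        Filter.atTop (nhds 0) := by
      have hcomp : Filter.Tendsto (fun R : ℝ => lam * R) Filter.atTop Filter.atTop :=
        Filter.Tendsto.const_mul_atTop hlampos Filter.tendsto_id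
      have hbase := (tendsto_pow_mul_exp_neg_atTop_nhds_zero 1).comp hcomp
      have : Filter.Tendsto (fun R : ℝ => (2 / lam) * ((lam * R) ^ 1 * Real.exp (-(lam * R))))
          Filter.atTop (nhds ((2 / lam) * 0)) := hbase.const_mul _
      rw [mul_zero] at this
      refine this.congr (fun R => ?_)
      rw [pow_one]
      rw [show lam * (-R) = -(lam * R) by ring]
      field_simp
    have h2 : Filter.Tendsto (fun R : ℝ => 2 * (R⁻¹ * lam⁻¹)) Filter.atTop (nhds 0) := by
      have := tendsto_inv_atTop_zero (𝕜 := ℝ)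
      have h3 := this.const_mul (2 * lam⁻¹)
      rw [mul_zero] at h3
      refine h3.congr (fun R => ?_)
      ring
    have := h1.add h2
    rw [add_zero] at this
    exact this
  refine squeeze_zero_norm' ?_ hG
  filter_upwards [Filter.eventually_ge_atTop (1:ℝ)] with R hR
  exact key R hR
end

section
/- Let H, L be Hermitian matrices with L ⪰ λ₀ I for λ₀ > 0, and let ω be a complex number with nonnegative real part. Then ‖e^{-iH - ωL}‖ ≤ e^{-λ₀ Re(ω)}, where ‖·‖ is the operator norm. -/
set_option maxHeartbeats 1000000

open Matrix
open scoped ComplexOrder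

open scoped Matrix.Norms.L2Operator

/-- Hermitian quadratic forms are real. -/
lemma herm_quad_im_zero {n : ℕ} {M : Matrix (Fin n) (Fin n) ℂ} (hM : M.IsHermitian)
    (y : Fin n → ℂ) : (star y ⬝ᵥ (M *ᵥ y)).im = 0 := by
  have h : (starRingEnd ℂ) (star y ⬝ᵥ (M *ᵥ y)) = star y ⬝ᵥ (M *ᵥ y) := by
    have h1 : star y ⬝ᵥ (M *ᵥ y) = star (star (M *ᵥ y) ⬝ᵥ y) := star_dotProduct _ _
    calc (starRingEnd ℂ) (star y ⬝ᵥ (M *ᵥ y)) = star (star y ⬝ᵥ (M *ᵥ y)) := rfl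
      _ = star (M *ᵥ y) ⬝ᵥ y := by rw [h1, star_star]
      _ = (star y ᵥ* Mᴴ) ⬝ᵥ y := by rw [star_mulVec]
      _ = star y ⬝ᵥ (Mᴴ *ᵥ y) := (dotProduct_mulVec _ _ _).symm
      _ = star y ⬝ᵥ (M *ᵥ y) := by rw [hM.eq]
  exact Complex.conj_eq_iff_im.mp h

/-- If `H`, `L` are Hermitian with `L ⪰ λ₀ I`, `λ₀ > 0`, and `Re ω ≥ 0`, then
`‖e^{-iH - ωL}‖ ≤ e^{-λ₀ Re ω}` in the `ℓ²` operator norm. -/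
theorem exp_contraction_bound (n : ℕ) (H L : Matrix (Fin n) (Fin n) ℂ)
    (hH : H.IsHermitian) (hL : L.IsHermitian) (lam0 : ℝ) (hlam : 0 < lam0)
    (hLlow : (L - lam0 • (1 : Matrix (Fin n) (Fin n) ℂ)).PosSemidef)
    (ω : ℂ) (hω : 0 ≤ ω.re) :
    ‖NormedSpace.exp (-(Complex.I • H) - ω • L)‖ ≤ Real.exp (-(lam0 * ω.re)) := by
  classical
  set c : ℝ := lam0 * ω.re with hc
  set A : Matrix (Fin n) (Fin n) ℂ := -(Complex.I • H) - ω • L with hA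
  -- key quadratic-form bound
  have hquad : ∀ y : Fin n → ℂ,
      (star y ⬝ᵥ (A *ᵥ y)).re ≤ -c * (star y ⬝ᵥ y).re := by
    intro y
    have hsplit : star y ⬝ᵥ (A *ᵥ y)
        = -(Complex.I * (star y ⬝ᵥ (H *ᵥ y))) - ω * (star y ⬝ᵥ (L *ᵥ y)) := by
      rw [hA]
      simp [Matrix.sub_mulVec, Matrix.neg_mulVec, Matrix.smul_mulVec,
        dotProduct_sub, dotProduct_neg, dotProduct_smul, smul_eq_mul]
    have hHim : (star y ⬝ᵥ (H *ᵥ y)).im = 0 := herm_quad_im_zero hH y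
    have hLim : (star y ⬝ᵥ (L *ᵥ y)).im = 0 := herm_quad_im_zero hL y
    have hpsd := (posSemidef_iff_dotProduct_mulVec.mp hLlow).2 y
    have hexpand : star y ⬝ᵥ ((L - lam0 • (1 : Matrix (Fin n) (Fin n) ℂ)) *ᵥ y)
        = star y ⬝ᵥ (L *ᵥ y) - (lam0 : ℂ) * (star y ⬝ᵥ y) := by
      simp [Matrix.sub_mulVec, Matrix.smul_mulVec, dotProduct_sub,
        dotProduct_smul, Matrix.one_mulVec, Complex.real_smul]
    rw [Complex.le_def] at hpsd
    rw [hexpand] at hpsd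
    have hre : lam0 * (star y ⬝ᵥ y).re ≤ (star y ⬝ᵥ (L *ᵥ y)).re := by
      have := hpsd.1
      simp [Complex.sub_re, Complex.mul_re, Complex.ofReal_re, Complex.ofReal_im] at this
      linarith
    have hy0 : 0 ≤ (star y ⬝ᵥ y).re := by
      have := dotProduct_star_self_nonneg y
      rw [Complex.le_def] at this
      simpa using this.1
    rw [hsplit]
    simp only [Complex.sub_re, Complex.neg_re, Complex.mul_re, Complex.I_re, Complex.I_im,
      hHim, hLim]
    ring_nf
    nlinarith [mul_le_mul_of_nonneg_left hre hω]
  -- the two exponentials agree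
  have hexp : (NormedSpace.exp : Matrix (Fin n) (Fin n) ℂ → Matrix (Fin n) (Fin n) ℂ)
      = NormedSpace.exp := rfl
  -- vector-level bound
  have hvec : ∀ x : EuclideanSpace ℂ (Fin n),
      ‖(toEuclideanLin.trans LinearMap.toContinuousLinearMap (NormedSpace.exp A)) x‖
        ≤ Real.exp (-c) * ‖x‖ := by
    intro x
    set x' : Fin n → ℂ := WithLp.equiv 2 (Fin n → ℂ) x with hx'
    -- the continuous linear map `M ↦ M *ᵥ x`
    let Φlin : Matrix (Fin n) (Fin n) ℂ →ₗ[ℝ] EuclideanSpace ℂ (Fin n) :=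
      { toFun := fun M => (WithLp.equiv 2 (Fin n → ℂ)).symm (M *ᵥ x')
        map_add' := fun M N => by
          ext i
          simp [Matrix.add_mulVec]
        map_smul' := fun r M => by
          ext i
          simp [Matrix.smul_mulVec] }
    let Φ : Matrix (Fin n) (Fin n) ℂ →L[ℝ] EuclideanSpace ℂ (Fin n) :=
      LinearMap.toContinuousLinearMap Φlin
    set u : ℝ → EuclideanSpace ℂ (Fin n) := fun t => Φ (NormedSpace.exp (t • A)) with hu
    have hM : ∀ t : ℝ, HasDerivAt (fun t : ℝ => NormedSpace.exp (t • A))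
        (A * NormedSpace.exp (t • A)) t := fun t => hasDerivAt_exp_smul_const' A t
    have hud : ∀ t : ℝ, HasDerivAt u (Φ (A * NormedSpace.exp (t • A))) t := fun t =>
      (Φ.hasFDerivAt.comp_hasDerivAt t (hM t))
    have hΦmul : ∀ t : ℝ, Φ (A * NormedSpace.exp (t • A))
        = (WithLp.equiv 2 (Fin n → ℂ)).symm (A *ᵥ (WithLp.equiv 2 (Fin n → ℂ) (u t))) := by
      intro t
      show (WithLp.equiv 2 (Fin n → ℂ)).symm ((A * NormedSpace.exp (t • A)) *ᵥ x') = _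
      rw [← Matrix.mulVec_mulVec]
      rfl
    -- φ t = ‖u t‖²  via inner products
    set φ : ℝ → ℝ := fun t => (inner ℂ (u t) (u t) : ℂ).re with hφdef
    have hφd : ∀ t : ℝ, HasDerivAt φ
        (((inner ℂ (u t) (Φ (A * NormedSpace.exp (t • A))) : ℂ)
          + (inner ℂ (Φ (A * NormedSpace.exp (t • A))) (u t) : ℂ)).re) t := by
      intro t
      exact (Complex.reCLM.hasFDerivAt.comp_hasDerivAt t
        (HasDerivAt.inner ℂ (hud t) (hud t)))
    -- ψ t = exp(2 c t) * φ t is antitone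
    set ψ : ℝ → ℝ := fun t => Real.exp (2 * c * t) * φ t with hψdef
    have hψd : ∀ t : ℝ, HasDerivAt ψ
        (Real.exp (2 * c * t) * (2 * c) * φ t + Real.exp (2 * c * t)
          * (((inner ℂ (u t) (Φ (A * NormedSpace.exp (t • A))) : ℂ)
          + (inner ℂ (Φ (A * NormedSpace.exp (t • A))) (u t) : ℂ)).re)) t := by
      intro t
      have he : HasDerivAt (fun t : ℝ => Real.exp (2 * c * t))
          (Real.exp (2 * c * t) * (2 * c)) t :=
        by
          have hlin : HasDerivAt (fun t : ℝ => 2 * c * t) (2 * c) t := by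
            simpa using (hasDerivAt_id t).const_mul (2 * c)
          exact (Real.hasDerivAt_exp (2 * c * t)).comp t hlin
      exact he.mul (hφd t)
    have hderiv_nonpos : ∀ t : ℝ, deriv ψ t ≤ 0 := by
      intro t
      rw [(hψd t).deriv]
      have key : ((inner ℂ (u t) (Φ (A * NormedSpace.exp (t • A))) : ℂ)
          + (inner ℂ (Φ (A * NormedSpace.exp (t • A))) (u t) : ℂ)).re
          ≤ -(2 * c) * φ t := by
        set y : Fin n → ℂ := WithLp.equiv 2 (Fin n → ℂ) (u t) with hy
        have h1 : (inner ℂ (u t) (Φ (A * NormedSpace.exp (t • A))) : ℂ)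
            = star y ⬝ᵥ (A *ᵥ y) := by
          rw [hΦmul t, EuclideanSpace.inner_eq_star_dotProduct, dotProduct_comm]; rfl
        have h2 : (inner ℂ (Φ (A * NormedSpace.exp (t • A))) (u t) : ℂ)
            = star (star y ⬝ᵥ (A *ᵥ y)) := by
          rw [hΦmul t]
          rw [EuclideanSpace.inner_eq_star_dotProduct]
          rw [star_dotProduct, star_star, dotProduct_comm]
          rfl
        have h3 : φ t = (star y ⬝ᵥ y).re := by
          show (inner ℂ (u t) (u t)).re = _
          rw [EuclideanSpace.inner_eq_star_dotProduct, dotProduct_comm]; rfl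
        rw [h1, h2, h3, Complex.add_re, Complex.star_def, Complex.conj_re]
        have := hquad y
        linarith
      have hφnn : 0 ≤ φ t := by
        have h := inner_self_eq_norm_sq (𝕜 := ℂ) (u t)
        rw [RCLike.re_to_complex] at h
        show 0 ≤ (inner ℂ (u t) (u t) : ℂ).re
        rw [h]; positivity
      have hexp_pos : (0:ℝ) < Real.exp (2 * c * t) := Real.exp_pos _
      nlinarith [mul_le_mul_of_nonneg_left key (le_of_lt hexp_pos)]
    have hanti : Antitone ψ :=
      antitone_of_deriv_nonpos (fun t => (hψd t).differentiableAt) hderiv_nonpos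
    have h10 : ψ 1 ≤ ψ 0 := hanti (by norm_num)
    -- compute ψ 0 and ψ 1
    have hu0 : u 0 = x := by
      show Φ (NormedSpace.exp ((0:ℝ) • A)) = x
      rw [zero_smul, NormedSpace.exp_zero]
      show (WithLp.equiv 2 (Fin n → ℂ)).symm ((1 : Matrix (Fin n) (Fin n) ℂ) *ᵥ x') = x
      rw [Matrix.one_mulVec]
      exact (WithLp.equiv 2 (Fin n → ℂ)).symm_apply_apply x
    have hu1 : u 1 = (toEuclideanLin.trans LinearMap.toContinuousLinearMap
        (NormedSpace.exp A)) x := by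
      show Φ (NormedSpace.exp ((1:ℝ) • A)) = _
      rw [one_smul, hexp]
      rfl
    have hψ0 : ψ 0 = ‖x‖ ^ 2 := by
      have h := inner_self_eq_norm_sq (𝕜 := ℂ) x
      rw [RCLike.re_to_complex] at h
      simp only [hψdef, mul_zero, Real.exp_zero, one_mul, hφdef, hu0, h]
    have hψ1 : ψ 1 = Real.exp (2 * c) * ‖(toEuclideanLin.trans LinearMap.toContinuousLinearMap
        (NormedSpace.exp A)) x‖ ^ 2 := by
      have h := inner_self_eq_norm_sq (𝕜 := ℂ)
        ((toEuclideanLin.trans LinearMap.toContinuousLinearMap (NormedSpace.exp A)) x)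
      rw [RCLike.re_to_complex] at h
      simp only [hψdef, mul_one, hφdef, hu1, h]
    rw [hψ0, hψ1] at h10
    set v := (toEuclideanLin.trans LinearMap.toContinuousLinearMap (NormedSpace.exp A)) x
    have hsq : ‖v‖ ^ 2 ≤ (Real.exp (-c) * ‖x‖) ^ 2 := by
      have he2 : Real.exp (2 * c) * Real.exp (-c) ^ 2 = 1 := by
        rw [← Real.exp_nat_mul]
        push_cast
        rw [← Real.exp_add]
        norm_num
      have hepos : (0:ℝ) < Real.exp (2 * c) := Real.exp_pos _
      have hx2 : Real.exp (2 * c) * ‖v‖ ^ 2 ≤ ‖x‖ ^ 2 := h10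
      nlinarith [sq_nonneg (Real.exp (-c)), Real.exp_pos (-c)]
    have h1 := Real.sqrt_le_sqrt hsq
    rwa [Real.sqrt_sq (norm_nonneg v), Real.sqrt_sq (by positivity)] at h1
  rw [Matrix.l2_opNorm_def]
  exact ContinuousLinearMap.opNorm_le_bound _ (Real.exp_nonneg _) hvec
end

section
/- Let A be an n×n complex matrix written as A = L + iH with L = (A + A†)/2 Hermitian positive semidefinite and H = (A − A†)/(2i) Hermitian. Then for all t ≥ 0, e^{-At} = ∫_ℝ (1/(π(1+k²))) e^{-i(H + kL)t} dk. -/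
open Matrix
open scoped ComplexOrder

open MeasureTheory Real
open scoped Matrix.Norms.L2Operator

open Filter
open scoped InnerProductSpace

section LCHSAux

variable {E : Type*} [NormedAddCommGroup E] [NormedSpace ℂ E] [CompleteSpace E]

lemma lowerhalf_integral_zero {E : Type*} [NormedAddCommGroup E] [NormedSpace ℂ E]
    [CompleteSpace E] (h : ℂ → E)
    (hd : ∀ z : ℂ, z.im ≤ 0 → DifferentiableAt ℂ h z)
    (hi : Integrable (fun x : ℝ => h (x : ℂ)))
    (M : ℝ) (hM : 0 ≤ M)
    (hb : ∀ z : ℂ, z.im ≤ 0 → 2 ≤ ‖z‖ → ‖h z‖ ≤ M / ‖z‖ ^ 2) :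
    ∫ x : ℝ, h (x : ℂ) = 0 := by
  have T1 : Tendsto (fun R : ℝ => ∫ x in (-R)..R, h x) atTop (nhds (∫ x : ℝ, h x)) :=
    intervalIntegral_tendsto_integral hi tendsto_neg_atTop_atBot tendsto_id
  have key : ∀ R : ℝ, 2 ≤ R → ‖∫ x in (-R)..R, h x‖ ≤ 4 * M / R := by
    intro R hR
    have hR0 : (0:ℝ) < R := lt_of_lt_of_le (by norm_num) hR
    set z : ℂ := ((-R : ℝ) : ℂ) with hz
    set w : ℂ := (R : ℂ) - (R : ℂ) * Complex.I with hw
    have hzre : z.re = -R := by simp [hz]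
    have hzim : z.im = 0 := by simp [hz]
    have hwre : w.re = R := by simp [hw]
    have hwim : w.im = -R := by simp [hw]
    have hrect := Complex.integral_boundary_rect_eq_zero_of_differentiableOn h z w ?_
    swap
    · intro p hp
      rw [Complex.mem_reProdIm] at hp
      have hpim : p.im ≤ 0 := by
        rcases Set.mem_uIcc.mp hp.2 with ⟨h1, h2⟩ | ⟨h1, h2⟩ <;> rw [hzim, hwim] at * <;> linarith
      exact (hd p hpim).differentiableWithinAt
    rw [hzre, hzim, hwre, hwim] at hrect
    -- bounds
    have hbound : ∀ (y₀ : ℝ), y₀ ≤ 0 → ∀ p : ℂ, p.im ≤ 0 → R ≤ ‖p‖ → ‖h p‖ ≤ M / R ^ 2 := by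
      intro y₀ _ p hpim hpR
      refine (hb p hpim (le_trans hR hpR)).trans ?_
      apply div_le_div_of_nonneg_left hM (by positivity)
      calc R ^ 2 ≤ ‖p‖ ^ 2 := by
            apply pow_le_pow_left₀ (le_of_lt hR0) hpR
        _ = ‖p‖ ^ 2 := rfl
    have hB : ‖∫ x in (-R)..R, h ((x : ℂ) + (-R : ℝ) * Complex.I)‖ ≤ 2 * M / R := by
      have := intervalIntegral.norm_integral_le_of_norm_le_const (C := M / R ^ 2)
        (f := fun x : ℝ => h ((x : ℂ) + (-R : ℝ) * Complex.I)) (a := -R) (b := R) ?_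
      · refine this.trans ?_
        rw [show R - (-R) = 2 * R by ring, abs_of_pos (by linarith)]
        rw [div_mul_eq_mul_div, div_le_div_iff₀ (by positivity) hR0]
        ring_nf
        nlinarith [sq_nonneg R, hM, hR0]
      · intro x hx
        set p : ℂ := (x : ℂ) + (-R : ℝ) * Complex.I with hp
        have h1 : p.im = -R := by simp [hp]
        have h2 : R ≤ ‖p‖ := by
          have := Complex.abs_im_le_norm p
          rw [h1] at this
          simpa [abs_of_pos hR0] using this
        exact hbound (-R) (by linarith) p (by rw [h1]; linarith) h2
    have hC : ∀ x₀ : ℝ, |x₀| = R →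
        ‖∫ y in (0:ℝ)..(-R), h ((x₀ : ℂ) + (y : ℝ) * Complex.I)‖ ≤ M / R := by
      intro x₀ hx₀
      have := intervalIntegral.norm_integral_le_of_norm_le_const (C := M / R ^ 2)
        (f := fun y : ℝ => h ((x₀ : ℂ) + (y : ℝ) * Complex.I)) (a := 0) (b := -R) ?_
      · refine this.trans ?_
        rw [show (-R) - (0:ℝ) = -R by ring, abs_neg, abs_of_pos hR0]
        rw [div_mul_eq_mul_div, div_le_div_iff₀ (by positivity) hR0]
        nlinarith [hM, hR0]
      · intro y hy
        have hy' : -R ≤ y ∧ y ≤ 0 := by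
          rcases Set.mem_uIoc.mp hy with ⟨h1, h2⟩ | ⟨h1, h2⟩ <;> constructor <;> linarith
        set p : ℂ := (x₀ : ℂ) + (y : ℝ) * Complex.I with hp
        have h1 : p.im = y := by simp [hp]
        have h1' : p.re = x₀ := by simp [hp]
        have h2 : R ≤ ‖p‖ := by
          have := Complex.abs_re_le_norm p
          rw [h1', hx₀] at this
          exact this
        exact hbound y hy'.2 p (by rw [h1]; exact hy'.2) h2
    simp only [Complex.ofReal_zero, zero_mul, add_zero] at hrect
    have habel : ∀ (a b c d : E), a - b + c - d = 0 → a = b - c + d := by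
      intro a b c d hh
      rw [← sub_eq_zero]
      rw [show a - (b - c + d) = a - b + c - d by abel, hh]
    have hA := habel _ _ _ _ hrect
    rw [hA]
    have hbound3 : ∀ (b c d : E), ‖b‖ ≤ 2 * M / R → ‖c‖ ≤ M / R → ‖d‖ ≤ M / R →
        ‖b - Complex.I • c + Complex.I • d‖ ≤ 4 * M / R := by
      intro b c d h1 h2 h3
      calc ‖b - Complex.I • c + Complex.I • d‖
          ≤ ‖b - Complex.I • c‖ + ‖Complex.I • d‖ := norm_add_le _ _
        _ ≤ ‖b‖ + ‖Complex.I • c‖ + ‖Complex.I • d‖ :=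
            add_le_add_left (norm_sub_le _ _) _
        _ ≤ 2 * M / R + M / R + M / R := by
            simp only [norm_smul, Complex.norm_I, one_mul]
            gcongr
        _ = 4 * M / R := by ring
    exact hbound3 _ _ _ hB (hC R (abs_of_pos hR0))
      (hC (-R) (by rw [abs_neg, abs_of_pos hR0]))
  have T2 : Tendsto (fun R : ℝ => ∫ x in (-R)..R, h x) atTop (nhds 0) := by
    apply squeeze_zero_norm' (Filter.eventually_atTop.mpr ⟨2, key⟩)
    exact tendsto_const_nhds.div_atTop tendsto_id
  exact tendsto_nhds_unique T1 T2


set_option maxHeartbeats 2000000 in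
lemma poisson_lower (Φ : ℂ → E) (hΦ : Differentiable ℂ Φ)
    (hb : ∀ z : ℂ, z.im ≤ 0 → ‖Φ z‖ ≤ 1) :
    ∫ k : ℝ, (((π * (1 + k ^ 2) : ℝ) : ℂ))⁻¹ • Φ (k : ℂ) = Φ (-Complex.I) := by
  set c : ℝ → ℂ := fun k => (((π * (1 + k ^ 2) : ℝ) : ℂ))⁻¹ with hc
  set g : ℂ → E := dslope Φ (-Complex.I) with hg
  have hgdiff : Differentiable ℂ g := by
    rw [← differentiableOn_univ]
    exact (Complex.differentiableOn_dslope (Filter.univ_mem)).mpr hΦ.differentiableOn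
  set h : ℂ → E := fun z => ((π : ℂ) * (z - Complex.I))⁻¹ • g z with hh
  have hIne : ∀ z : ℂ, z.im ≤ 0 → ((π : ℂ) * (z - Complex.I)) ≠ 0 := by
    intro z hz
    refine mul_ne_zero (by exact_mod_cast Real.pi_ne_zero) (fun hzero => ?_)
    rw [sub_eq_zero] at hzero
    rw [hzero] at hz
    simp only [Complex.I_im] at hz
    linarith
  have hd : ∀ z : ℂ, z.im ≤ 0 → DifferentiableAt ℂ h z := fun z hz =>
    ((((differentiableAt_id (x := z)).sub_const Complex.I).const_mul (π : ℂ)).inv (hIne z hz)).smul (hgdiff z)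
  -- pointwise splitting
  have hne : ∀ k : ℝ, (k : ℂ) ≠ -Complex.I := by
    intro k hcon
    have := congrArg Complex.im hcon
    simp at this
  have hsplit : ∀ k : ℝ, c k • Φ (k : ℂ) = c k • Φ (-Complex.I) + h (k : ℂ) := by
    intro k
    have hgk : g (k : ℂ) = ((k : ℂ) + Complex.I)⁻¹ • (Φ (k : ℂ) - Φ (-Complex.I)) := by
      rw [hg, dslope_of_ne _ (hne k), slope_def_module]
      rw [sub_neg_eq_add]
    have hck : ((π : ℂ) * ((k : ℂ) - Complex.I))⁻¹ * ((k : ℂ) + Complex.I)⁻¹ = c k := by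
      rw [hc, ← mul_inv]
      congr 1
      push_cast
      rw [show ((π:ℂ) * ((k:ℂ) - Complex.I)) * ((k:ℂ) + Complex.I)
          = (π:ℂ) * ((k:ℂ)^2 - Complex.I^2) by ring, Complex.I_sq]
      ring
    simp only [hh]
    rw [hgk, smul_smul, hck, smul_sub]
    abel
  -- integrabilities
  have hcReal : Integrable (fun k : ℝ => (π * (1 + k ^ 2))⁻¹) := by
    simpa [mul_inv, mul_comm] using integrable_inv_one_add_sq.const_mul π⁻¹
  have hcInt : Integrable c := by
    have : c = fun k : ℝ => (((π * (1 + k ^ 2))⁻¹ : ℝ) : ℂ) := by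
      funext k; rw [hc]; push_cast; ring
    rw [this]
    exact hcReal.ofReal
  have hpos : ∀ k : ℝ, 0 < π * (1 + k ^ 2) := by
    intro k; positivity
  have hccont : Continuous c := by
    rw [hc]
    apply Continuous.inv₀
    · exact Complex.continuous_ofReal.comp (by continuity)
    · intro k
      exact Complex.ofReal_ne_zero.mpr (hpos k).ne'
  have hInt0 : Integrable (fun k : ℝ => c k • Φ (k : ℂ)) := by
    refine Integrable.mono' (hcReal.norm) ?_ ?_
    · exact (hccont.smul (hΦ.continuous.comp Complex.continuous_ofReal)).aestronglyMeasurable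
    · refine Filter.Eventually.of_forall fun k => ?_
      rw [norm_smul]
      have h1 : ‖c k‖ = (π * (1 + k ^ 2))⁻¹ := by
        rw [hc, norm_inv, Complex.norm_real, Real.norm_of_nonneg (hpos k).le]
      rw [h1]
      have h2 : ‖Φ (k : ℂ)‖ ≤ 1 := hb _ (by simp)
      calc (π * (1 + k ^ 2))⁻¹ * ‖Φ (k : ℂ)‖ ≤ (π * (1 + k ^ 2))⁻¹ * 1 := by
            gcongr
        _ = ‖(π * (1 + k ^ 2))⁻¹‖ := by
            rw [mul_one, Real.norm_of_nonneg (inv_nonneg.mpr (hpos k).le)]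
  have hInt1 : Integrable (fun k : ℝ => c k • Φ (-Complex.I)) := hcInt.smul_const _
  have hInt2 : Integrable (fun k : ℝ => h (k : ℂ)) := by
    have : (fun k : ℝ => h (k : ℂ)) = fun k => c k • Φ (k : ℂ) - c k • Φ (-Complex.I) := by
      funext k
      rw [hsplit k]; abel
    rw [this]
    exact hInt0.sub hInt1
  -- the h-integral vanishes
  have hzero : ∫ k : ℝ, h (k : ℂ) = 0 := by
    refine lowerhalf_integral_zero h hd hInt2 8 (by norm_num) ?_
    intro z hz hz2
    have hrpos : (0:ℝ) < ‖z‖ := by linarith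
    have hzneI : z ≠ -Complex.I := by
      intro hcon
      rw [hcon] at hz2
      simp at hz2
    have hgz : g z = (z + Complex.I)⁻¹ • (Φ z - Φ (-Complex.I)) := by
      rw [hg, dslope_of_ne _ hzneI, slope_def_module, sub_neg_eq_add]
    have hnorm1 : ‖z‖ / 2 ≤ ‖z - Complex.I‖ := by
      have := norm_sub_norm_le z Complex.I
      rw [Complex.norm_I] at this
      linarith
    have hnorm2 : ‖z‖ / 2 ≤ ‖z + Complex.I‖ := by
      have := norm_sub_norm_le z (-Complex.I)
      rw [norm_neg, Complex.norm_I, sub_neg_eq_add] at this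
      linarith
    have hΦ2 : ‖Φ z - Φ (-Complex.I)‖ ≤ 2 := by
      have h1 := hb z hz
      have h2 := hb (-Complex.I) (by simp)
      calc ‖Φ z - Φ (-Complex.I)‖ ≤ ‖Φ z‖ + ‖Φ (-Complex.I)‖ := norm_sub_le _ _
        _ ≤ 2 := by linarith
    have hgz_norm : ‖g z‖ ≤ (‖z‖ / 2)⁻¹ * 2 := by
      rw [hgz, norm_smul, norm_inv]
      have : ‖z + Complex.I‖⁻¹ ≤ (‖z‖ / 2)⁻¹ :=
        inv_anti₀ (by linarith) hnorm2
      exact mul_le_mul this hΦ2 (norm_nonneg _) (by positivity)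
    have hc_norm : ‖((π : ℂ) * (z - Complex.I))⁻¹‖ ≤ (π * (‖z‖ / 2))⁻¹ := by
      rw [norm_inv, norm_mul, Complex.norm_real, norm_of_nonneg Real.pi_pos.le]
      apply inv_anti₀ (by positivity)
      gcongr
    calc ‖h z‖ ≤ (π * (‖z‖ / 2))⁻¹ * ((‖z‖ / 2)⁻¹ * 2) := by
          simp only [hh]
          rw [norm_smul]
          exact mul_le_mul hc_norm hgz_norm (norm_nonneg _) (by positivity)
      _ ≤ 8 / ‖z‖ ^ 2 := by
          have heq : (π * (‖z‖ / 2))⁻¹ * ((‖z‖ / 2)⁻¹ * 2) = 8 / (π * ‖z‖ ^ 2) := by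
            field_simp
            ring
          rw [heq]
          apply div_le_div_of_nonneg_left (by norm_num) (by positivity)
          nlinarith [Real.pi_gt_three, sq_nonneg ‖z‖]
  -- conclude
  have hcint_val : ∫ k : ℝ, c k = 1 := by
    have h1 : ∫ k : ℝ, c k = ((∫ k : ℝ, (π * (1 + k ^ 2))⁻¹ : ℝ) : ℂ) := by
      have hcfun : c = fun k : ℝ => (((π * (1 + k ^ 2))⁻¹ : ℝ) : ℂ) :=
        funext fun k => by rw [hc]; push_cast; ring
      rw [hcfun]
      exact integral_ofReal
    rw [h1]
    have h2 : ∫ k : ℝ, (π * (1 + k ^ 2))⁻¹ = π⁻¹ * ∫ k : ℝ, (1 + k ^ 2)⁻¹ := by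
      rw [← integral_const_mul]
      congr 1; funext k; rw [mul_inv]
    rw [h2, integral_univ_inv_one_add_sq, inv_mul_cancel₀ Real.pi_ne_zero]
    norm_num
  calc ∫ k : ℝ, c k • Φ (k : ℂ) = ∫ k : ℝ, (c k • Φ (-Complex.I) + h (k : ℂ)) := by
        congr 1; funext k; exact hsplit k
    _ = (∫ k : ℝ, c k • Φ (-Complex.I)) + ∫ k : ℝ, h (k : ℂ) := integral_add hInt1 hInt2
    _ = (∫ k : ℝ, c k) • Φ (-Complex.I) + 0 := by rw [integral_smul_const, hzero]
    _ = Φ (-Complex.I) := by rw [hcint_val, one_smul, add_zero]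

set_option maxHeartbeats 1000000 in
lemma norm_exp_le_one_of_dissipative {n : ℕ} (M : Matrix (Fin n) (Fin n) ℂ)
    (hM : (-(M + Mᴴ)).PosSemidef) : ‖NormedSpace.exp M‖ ≤ 1 := by
  classical
  haveI : CompleteSpace (Matrix (Fin n) (Fin n) ℂ) := FiniteDimensional.complete ℂ _
  haveI : FiniteDimensional ℝ (Matrix (Fin n) (Fin n) ℂ) := Module.Finite.trans ℂ _
  have key : ∀ y : EuclideanSpace ℂ (Fin n),
      RCLike.re ⟪y, (Matrix.toEuclideanCLM (𝕜 := ℂ) M) y⟫_ℂ ≤ 0 := by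
    intro y
    have h1 : (0:ℝ) ≤ RCLike.re ⟪y, (Matrix.toEuclideanCLM (𝕜 := ℂ) (-(M + Mᴴ))) y⟫_ℂ := by
      have h2 := hM.re_dotProduct_nonneg (WithLp.ofLp y)
      rw [EuclideanSpace.inner_eq_star_dotProduct, Matrix.ofLp_toEuclideanCLM,
        dotProduct_comm]
      exact h2
    rw [map_neg, map_add] at h1
    have h3 : RCLike.re ⟪y, (Matrix.toEuclideanCLM (𝕜 := ℂ) Mᴴ) y⟫_ℂ
        = RCLike.re ⟪y, (Matrix.toEuclideanCLM (𝕜 := ℂ) M) y⟫_ℂ := by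
      have h4 : Matrix.toEuclideanCLM (𝕜 := ℂ) Mᴴ
          = ContinuousLinearMap.adjoint (Matrix.toEuclideanCLM (𝕜 := ℂ) M) := by
        rw [← ContinuousLinearMap.star_eq_adjoint, ← map_star]
        rfl
      rw [h4, ContinuousLinearMap.adjoint_inner_right, inner_re_symm]
    simp only [ContinuousLinearMap.neg_apply, ContinuousLinearMap.add_apply, inner_neg_right,
      inner_add_right, map_neg, map_add, h3] at h1
    linarith
  rw [Matrix.cstar_norm_def]
  refine ContinuousLinearMap.opNorm_le_bound _ zero_le_one fun x => ?_
  rw [one_mul]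
  let ev : Matrix (Fin n) (Fin n) ℂ →ₗ[ℝ] EuclideanSpace ℂ (Fin n) :=
    { toFun := fun B => Matrix.toEuclideanCLM (𝕜 := ℂ) B x
      map_add' := fun B C => by simp
      map_smul' := fun r B => by
        show Matrix.toEuclideanCLM (𝕜 := ℂ) (r • B) x
          = r • (Matrix.toEuclideanCLM (𝕜 := ℂ) B) x
        rw [← Complex.coe_smul, _root_.map_smul, ContinuousLinearMap.smul_apply,
          Complex.coe_smul] }
  let evc := LinearMap.toContinuousLinearMap ev
  set u : ℝ → EuclideanSpace ℂ (Fin n) := fun s => evc (NormedSpace.exp (s • M)) with hu_def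
  have hevc : ∀ B : Matrix (Fin n) (Fin n) ℂ, evc B = Matrix.toEuclideanCLM (𝕜 := ℂ) B x :=
    fun B => rfl
  have hu : ∀ s : ℝ, HasDerivAt u ((Matrix.toEuclideanCLM (𝕜 := ℂ) M) (u s)) s := by
    intro s
    have h1 := hasDerivAt_exp_smul_const' (𝕂 := ℝ) M s
    have h2 := evc.hasFDerivAt.comp_hasDerivAt s h1
    refine h2.congr_deriv ?_
    rw [hevc, _root_.map_mul, ContinuousLinearMap.mul_apply]
    rfl
  set g : ℝ → ℝ := fun s => RCLike.re ⟪u s, u s⟫_ℂ with hg_def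
  have hgd : ∀ s : ℝ, HasDerivAt g
      (RCLike.re (⟪u s, (Matrix.toEuclideanCLM (𝕜 := ℂ) M) (u s)⟫_ℂ
        + ⟪(Matrix.toEuclideanCLM (𝕜 := ℂ) M) (u s), u s⟫_ℂ)) s := by
    intro s
    have h1 := HasDerivAt.inner ℂ (hu s) (hu s)
    have h2 := Complex.reCLM.hasFDerivAt.comp_hasDerivAt s h1
    exact h2
  have hanti : Antitone g := by
    apply antitone_of_deriv_nonpos
    · exact fun s => (hgd s).differentiableAt
    · intro s
      rw [(hgd s).deriv]
      have := key (u s)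
      rw [map_add, inner_re_symm ((Matrix.toEuclideanCLM (𝕜 := ℂ) M) (u s)) (u s)]
      linarith
  have h01 : g 1 ≤ g 0 := hanti zero_le_one
  have hu1 : u 1 = Matrix.toEuclideanCLM (𝕜 := ℂ) (NormedSpace.exp M) x := by
    rw [hu_def]
    simp only [one_smul, hevc]
  have hu0 : u 0 = x := by
    rw [hu_def]
    simp only [zero_smul, NormedSpace.exp_zero, hevc, _root_.map_one, ContinuousLinearMap.one_apply]
  have hgs : ∀ s, g s = ‖u s‖ ^ 2 := fun s => (InnerProductSpace.norm_sq_eq_re_inner (𝕜 := ℂ) (u s)).symm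
  rw [hgs, hgs, hu1, hu0] at h01
  have := Real.sqrt_le_sqrt h01
  rwa [Real.sqrt_sq (norm_nonneg _), Real.sqrt_sq (norm_nonneg _)] at this

lemma posSemidef_ofReal_smul {n : ℕ} {L : Matrix (Fin n) (Fin n) ℂ} (hL : L.PosSemidef)
    {c : ℝ} (hc : 0 ≤ c) : ((c : ℂ) • L).PosSemidef := by
  rw [Matrix.posSemidef_iff_dotProduct_mulVec]
  constructor
  · show ((c : ℂ) • L)ᴴ = (c : ℂ) • L
    rw [Matrix.conjTranspose_smul, hL.1.eq]
    congr 1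
    simp [Complex.star_def, Complex.conj_ofReal]
  · intro x
    have h0 := hL.dotProduct_mulVec_nonneg x
    rw [Matrix.smul_mulVec, dotProduct_smul, smul_eq_mul]
    rw [Complex.le_def] at h0 ⊢
    obtain ⟨h1, h2⟩ := h0
    simp only [Complex.zero_re, Complex.zero_im, Complex.mul_re, Complex.mul_im,
      Complex.ofReal_re, Complex.ofReal_im] at *
    constructor
    · nlinarith
    · rw [← h2]; ring

end LCHSAux

/-- Time-independent LCHS formula: if `A = L + iH` with `L = (A+A†)/2` positive semidefinite
and `H = (A-A†)/(2i)`, then for `t ≥ 0`,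
`e^{-At} = ∫_ℝ (1/(π(1+k²))) e^{-i(H+kL)t} dk`. -/
theorem matrix_lchs (n : ℕ) (A L H : Matrix (Fin n) (Fin n) ℂ)
    (hLdef : L = (1 / 2 : ℂ) • (A + Aᴴ))
    (hHdef : H = (2 * Complex.I)⁻¹ • (A - Aᴴ))
    (hL : L.PosSemidef) (t : ℝ) (ht : 0 ≤ t) :
    NormedSpace.exp (-(t • A))
      = ∫ k : ℝ, (π * (1 + k ^ 2))⁻¹ •
          NormedSpace.exp (-((Complex.I * t) • (H + (k : ℂ) • L))) := by
  classical
  haveI : CompleteSpace (Matrix (Fin n) (Fin n) ℂ) := FiniteDimensional.complete ℂ _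
  have hLH : Lᴴ = L := hL.1
  have hHH : Hᴴ = H := by
    rw [hHdef, Matrix.conjTranspose_smul, Matrix.conjTranspose_sub,
      Matrix.conjTranspose_conjTranspose]
    have h2I : ((2:ℂ) * Complex.I)⁻¹ = -Complex.I / 2 := by
      refine inv_eq_of_mul_eq_one_right ?_
      rw [show ((2:ℂ) * Complex.I) * (-Complex.I / 2) = -(Complex.I * Complex.I) by ring,
        Complex.I_mul_I]
      norm_num
    have hstar : star ((2 * Complex.I)⁻¹ : ℂ) = -(2 * Complex.I)⁻¹ := by
      rw [h2I]
      simp [Complex.star_def, map_div₀, Complex.conj_I, neg_div]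
    rw [hstar, neg_smul, ← smul_neg, neg_sub]
  -- differentiability of the integrand in z
  have hdiff : Differentiable ℂ
      (fun z : ℂ => NormedSpace.exp (-((Complex.I * (t : ℂ)) • (H + z • L)))) := by
    intro z
    have h1 : DifferentiableAt ℂ (fun z : ℂ => -((Complex.I * (t : ℂ)) • (H + z • L))) z := by
      apply DifferentiableAt.neg
      refine DifferentiableAt.const_smul (f := fun z : ℂ => H + z • L) ?_ (Complex.I * (t : ℂ))
      exact (differentiableAt_const H).add (differentiableAt_id.smul_const L)
    exact ((NormedSpace.exp_analytic _).differentiableAt).comp z h1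
  -- norm bound on the closed lower half plane
  have hbound : ∀ z : ℂ, z.im ≤ 0 →
      ‖NormedSpace.exp (-((Complex.I * (t : ℂ)) • (H + z • L)))‖ ≤ 1 := by
    intro z hz
    apply norm_exp_le_one_of_dissipative
    have hMH : (-((Complex.I * (t : ℂ)) • (H + z • L)))ᴴ
        = (Complex.I * (t : ℂ)) • (H + (starRingEnd ℂ) z • L) := by
      rw [Matrix.conjTranspose_neg, Matrix.conjTranspose_smul, Matrix.conjTranspose_add,
        Matrix.conjTranspose_smul, hLH, hHH]
      rw [show star (Complex.I * (t : ℂ)) = -(Complex.I * (t : ℂ)) by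
        rw [Complex.star_def, _root_.map_mul, Complex.conj_I, Complex.conj_ofReal]; ring]
      rw [neg_smul, neg_neg]
      rfl
    have hcalc : -((-((Complex.I * (t : ℂ)) • (H + z • L)))
          + (-((Complex.I * (t : ℂ)) • (H + z • L)))ᴴ)
        = ((-(2 * t * z.im) : ℝ) : ℂ) • L := by
      rw [hMH, neg_add, neg_neg, ← sub_eq_add_neg, ← smul_sub]
      rw [show (H + z • L) - (H + (starRingEnd ℂ) z • L) = (z - (starRingEnd ℂ) z) • L by
        rw [sub_smul]; abel]
      rw [smul_smul, Complex.sub_conj]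
      congr 1
      push_cast
      rw [show Complex.I * (t:ℂ) * (2 * (z.im:ℂ) * Complex.I)
          = 2 * (t:ℂ) * (z.im:ℂ) * (Complex.I * Complex.I) by ring, Complex.I_mul_I]
      ring
    rw [hcalc]
    exact posSemidef_ofReal_smul hL (by nlinarith)
  have hmain := poisson_lower
    (fun z : ℂ => NormedSpace.exp (-((Complex.I * (t : ℂ)) • (H + z • L)))) hdiff hbound
  -- identify the point value with exp(-(t • A))
  have hsmul : ∀ (r : ℝ) (B : Matrix (Fin n) (Fin n) ℂ), r • B = ((r : ℂ)) • B := by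
    intro r B
    ext i j
    simp [Matrix.smul_apply, Complex.real_smul]
  have hexp : NormedSpace.exp (-(t • A))
      = NormedSpace.exp (-((Complex.I * (t : ℂ)) • (H + (-Complex.I) • L))) := by
    congr 1
    rw [hsmul t A, hLdef, hHdef]
    have hIinv : ((2 : ℂ) * Complex.I)⁻¹ = -Complex.I / 2 := by
      refine inv_eq_of_mul_eq_one_right ?_
      rw [show ((2:ℂ) * Complex.I) * (-Complex.I / 2) = -(Complex.I * Complex.I) by ring,
        Complex.I_mul_I]
      norm_num
    rw [hIinv]
    match_scalars
    · linear_combination (-(t:ℂ)) * Complex.I_mul_I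
    · linear_combination
  rw [hexp, ← hmain]
  congr 1
  funext k
  rw [hsmul ((π * (1 + k ^ 2))⁻¹), Complex.ofReal_inv]
end
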